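/- For nonzero complex numbers Z and W, if |Z - W| ≤ δ < |W|, then the angular distance between arg(Z) and arg(W) satisfies sin(d(arg Z, arg W)) ≤ δ/|W|, and hence d(arg Z, arg W) ≤ arcsin(δ/|W|). -/

import Mathlib

open Complex

/-- Distance between two angles on the circle `ℝ / 2πℤ`. -/
noncomputable def circleDist (θ φ : ℝ) : ℝ := ⨅ k : ℤ, |θ - φ + 2 * (k : ℝ) * Real.pi|

/-- For nonzero complex `Z, W` with `|Z - W| ≤ δ < |W|`, the angular distance between their
arguments satisfies `sin (d(arg Z, arg W)) ≤ δ/|W|` and `d(arg Z, arg W) ≤ arcsin (δ/|W|)`. -/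
theorem arg_close_of_close (Z W : ℂ) (hZ : Z ≠ 0) (hW : W ≠ 0) (δ : ℝ)
    (h : ‖Z - W‖ ≤ δ) (hδ : δ < ‖W‖) :
    Real.sin (circleDist Z.arg W.arg) ≤ δ / ‖W‖ ∧
    circleDist Z.arg W.arg ≤ Real.arcsin (δ / ‖W‖) := by
  have hWa : (0:ℝ) < ‖W‖ := by
    simpa [norm_pos_iff] using hW
  set ε : ℝ := δ / ‖W‖ with hε
  have hε1 : ε < 1 := (div_lt_one hWa).mpr hδ
  set z : ℂ := Z / W with hzdef
  have hz0 : z ≠ 0 := div_ne_zero hZ hW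
  have hzsub : z - 1 = (Z - W) / W := by rw [hzdef]; field_simp
  have hzabs : ‖z - 1‖ ≤ ε := by
    rw [hzsub, norm_div, hε]
    exact div_le_div_of_nonneg_right h hWa.le
  have habs1 : ‖z - 1‖ < 1 := lt_of_le_of_lt hzabs hε1
  -- real part of z is positive
  have hre : 0 < z.re := by
    by_contra hc
    push_neg at hc
    have h1 : (‖z - 1‖)^2 = (z.re - 1)^2 + z.im^2 := by
      rw [Complex.sq_norm, Complex.normSq_apply]
      simp [Complex.sub_re, Complex.sub_im]
      ring
    nlinarith [norm_nonneg (z - 1), sq_nonneg z.im]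
  have ha2 : |z.arg| < Real.pi / 2 :=
    Complex.abs_arg_lt_pi_div_two_iff.mpr (Or.inl hre)
  have hzpos : (0:ℝ) < ‖z‖ := norm_pos_iff.mpr hz0
  -- |sin (arg z)| ≤ ε
  have hsinsq : (Real.sin z.arg)^2 ≤ (‖z - 1‖)^2 := by
    rw [Complex.sin_arg, Complex.sq_norm, Complex.normSq_apply, div_pow,
      div_le_iff₀ (by positivity), Complex.sq_norm, Complex.normSq_apply]
    simp only [Complex.sub_re, Complex.sub_im, Complex.one_re, Complex.one_im]
    nlinarith [sq_nonneg (z.re * z.re + z.im * z.im - z.re)]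
  have hsin : |Real.sin z.arg| ≤ ε := by
    have := Real.sqrt_le_sqrt hsinsq
    rw [Real.sqrt_sq_eq_abs, Real.sqrt_sq (norm_nonneg _)] at this
    exact this.trans hzabs
  -- circleDist equals |arg z|
  have harg : ∃ m : ℤ, Z.arg - W.arg - z.arg = 2 * Real.pi * m := by
    have := Complex.arg_div_coe_angle hZ hW
    rw [← hzdef] at this
    have h2 : ((Z.arg - W.arg : ℝ) : Real.Angle) = (z.arg : ℝ) := by
      rw [Real.Angle.coe_sub, this]
    exact Real.Angle.angle_eq_iff_two_pi_dvd_sub.mp h2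
  obtain ⟨m, hm⟩ := harg
  have hbdd : BddBelow (Set.range fun k : ℤ => |Z.arg - W.arg + 2 * (k : ℝ) * Real.pi|) :=
    ⟨0, by rintro x ⟨k, rfl⟩; exact abs_nonneg _⟩
  have hcd : circleDist Z.arg W.arg = |z.arg| := by
    apply le_antisymm
    · have := ciInf_le hbdd (-m)
      refine this.trans_eq ?_
      congr 1
      push_cast
      linarith [hm]
    · apply le_ciInf
      intro k
      have hk : Z.arg - W.arg + 2 * (k : ℝ) * Real.pi
          = z.arg + 2 * Real.pi * ((m : ℝ) + (k : ℝ)) := by linarith [hm]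
      rw [hk]
      rcases eq_or_ne ((m : ℝ) + (k : ℝ)) 0 with hj | hj
      · rw [hj]; simp
      · have hj1 : (1:ℝ) ≤ |(m : ℝ) + (k : ℝ)| := by
          have : ((m + k : ℤ) : ℝ) = (m : ℝ) + (k : ℝ) := by push_cast; ring
          rw [← this]
          rw [← Int.cast_abs]
          exact_mod_cast Int.one_le_abs (by exact_mod_cast fun hh => hj (by rw [← this, hh]; simp))
        have htri : |2 * Real.pi * ((m : ℝ) + (k : ℝ))| - |z.arg|
            ≤ |z.arg + 2 * Real.pi * ((m : ℝ) + (k : ℝ))| := by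
          have h4 := abs_sub_abs_le_abs_sub (2 * Real.pi * ((m : ℝ) + (k : ℝ))) (-z.arg)
          rw [abs_neg, sub_neg_eq_add] at h4
          rw [show z.arg + 2 * Real.pi * ((m : ℝ) + (k : ℝ))
              = 2 * Real.pi * ((m : ℝ) + (k : ℝ)) + z.arg from add_comm _ _]
          exact h4
        have habs2 : 2 * Real.pi ≤ |2 * Real.pi * ((m : ℝ) + (k : ℝ))| := by
          rw [abs_mul, abs_of_pos (by positivity : (0:ℝ) < 2 * Real.pi)]
          nlinarith [Real.pi_pos]
        nlinarith [Real.pi_pos]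
  rw [hcd]
  have habs_le : |z.arg| ≤ Real.pi / 2 := le_of_lt ha2
  have hsinabs : Real.sin |z.arg| = |Real.sin z.arg| := by
    rcases abs_cases z.arg with ⟨h1, h2⟩ | ⟨h1, h2⟩
    · rw [h1, _root_.abs_of_nonneg (Real.sin_nonneg_of_nonneg_of_le_pi h2
        (by linarith [Real.pi_pos, (abs_lt.mp ha2).2]))]
    · rw [h1, Real.sin_neg, _root_.abs_of_nonpos
        (Real.sin_nonpos_of_nonpos_of_neg_pi_le (le_of_lt h2)
          (by linarith [Real.pi_pos, (abs_lt.mp ha2).1]))]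
  constructor
  · rw [hsinabs]; exact hsin
  · have : |z.arg| = Real.arcsin (Real.sin |z.arg|) := by
      rw [Real.arcsin_sin (by linarith [abs_nonneg z.arg, Real.pi_pos]) habs_le]
    rw [this]
    exact Real.monotone_arcsin (by rw [hsinabs]; exact hsin)
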